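/- If A is a symmetric (0,2)-tensor with rank A = 2, then Q(A², (1/2) A ∧ A) = 0, i.e., the Tachibana tensor of A² and the generalized curvature tensor (1/2)A ∧ A vanishes. -/

import Mathlib

open Module

variable {V : Type*} [AddCommGroup V] [Module ℝ V]

/-- Kulkarni–Nomizu product of two (0,2)-tensors. -/
def KN (A B : V → V → ℝ) : V → V → V → V → ℝ := fun X1 X2 X3 X4 =>
  A X1 X4 * B X2 X3 + A X2 X3 * B X1 X4 - A X1 X3 * B X2 X4 - A X2 X4 * B X1 X3

/-- The endomorphism `X ∧_A Y` applied to `Z`. -/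
def wedgeEnd (A : V → V → ℝ) (X Y Z : V) : V := A Y Z • X - A X Z • Y

/-- Tachibana tensor `Q(A,T)` of a symmetric (0,2)-tensor `A` and a (0,4)-tensor `T`. -/
def Tach (A : V → V → ℝ) (T : V → V → V → V → ℝ) : V → V → V → V → V → V → ℝ :=
  fun X1 X2 X3 X4 X Y =>
    -(T (wedgeEnd A X Y X1) X2 X3 X4) - T X1 (wedgeEnd A X Y X2) X3 X4
      - T X1 X2 (wedgeEnd A X Y X3) X4 - T X1 X2 X3 (wedgeEnd A X Y X4)

/-- if a symmetric (0,2)-tensor `A` has rank 2, then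
`Q(A², (1/2) A ∧ A) = 0`. -/
theorem statement_8 [FiniteDimensional ℝ V]
    (g : LinearMap.BilinForm ℝ V) (hgs : ∀ X Y, g X Y = g Y X)
    (hgn : g.Nondegenerate)
    (a : V →ₗ[ℝ] V) (ha : ∀ X Y, g (a X) Y = g (a Y) X)
    (hrank : finrank ℝ (LinearMap.range a) = 2) (X1 X2 X3 X4 X Y : V) :
    Tach (fun x y => g (a (a x)) y)
      (fun b c d e => (1/2) * KN (fun x y => g (a x) y) (fun x y => g (a x) y) b c d e)
      X1 X2 X3 X4 X Y = 0 := by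
  classical
  -- symmetry of A²
  have hB : ∀ u v : V, g (a (a u)) v = g (a (a v)) u := fun u v =>
    (ha (a u) v).trans ((hgs (a v) (a u)).trans (ha (a v) u).symm)
  -- rank-2 decomposition of `a`
  let b : Basis (Fin 2) ℝ (LinearMap.range a) := finBasisOfFinrankEq ℝ _ hrank
  set e1 : V := (b 0 : V) with he1
  set e2 : V := (b 1 : V) with he2
  set α : V → ℝ := fun x => b.repr ⟨a x, LinearMap.mem_range_self a x⟩ 0 with hα
  set β : V → ℝ := fun x => b.repr ⟨a x, LinearMap.mem_range_self a x⟩ 1 with hβ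
  have hdec : ∀ x : V, a x = α x • e1 + β x • e2 := by
    intro x
    have h := b.sum_repr ⟨a x, LinearMap.mem_range_self a x⟩
    have h2 := congrArg (Subtype.val) h
    simp only [Fin.sum_univ_two, Submodule.coe_add, Submodule.coe_smul] at h2
    exact h2.symm
  set lam : ℝ := (α e1 + β e2) / 2 with hlam
  -- the key rank-2 identity:  A ∧ A² = λ · A ∧ A
  have hKN : ∀ x1 x2 x3 x4 : V,
      KN (fun x y => g (a x) y) (fun x y => g (a (a x)) y) x1 x2 x3 x4
        = lam * KN (fun x y => g (a x) y) (fun x y => g (a x) y) x1 x2 x3 x4 := by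
    intro x1 x2 x3 x4
    simp only [KN, hlam]
    simp only [hdec x1, hdec x2, hdec x3, hdec x4, hdec e1, hdec e2,
      map_add, map_smul, LinearMap.add_apply, LinearMap.smul_apply, smul_eq_mul]
    ring
  -- algebraic identity:  Q(A², ½ A∧A) = - Q(A, A∧A²)
  have key : Tach (fun x y => g (a (a x)) y)
      (fun b c d e => (1/2) * KN (fun x y => g (a x) y) (fun x y => g (a x) y) b c d e)
      X1 X2 X3 X4 X Y
      = -(Tach (fun x y => g (a x) y)
          (KN (fun x y => g (a x) y) (fun x y => g (a (a x)) y))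
          X1 X2 X3 X4 X Y) := by
    simp only [Tach, KN, wedgeEnd, map_sub, map_smul, LinearMap.sub_apply,
      LinearMap.smul_apply, smul_eq_mul]
    simp only [ha X2 X1, ha X3 X1, ha X4 X1, ha X X1, ha Y X1,
      ha X3 X2, ha X4 X2, ha X X2, ha Y X2, ha X4 X3, ha X X3, ha Y X3,
      ha X X4, ha Y X4, ha Y X,
      hB X2 X1, hB X3 X1, hB X4 X1, hB X X1, hB Y X1,
      hB X3 X2, hB X4 X2, hB X X2, hB Y X2, hB X4 X3, hB X X3, hB Y X3,
      hB X X4, hB Y X4, hB Y X]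
    ring
  -- use the rank-2 identity:  Q(A, A∧A²) = λ · Q(A, A∧A)
  have key2 : Tach (fun x y => g (a x) y)
      (KN (fun x y => g (a x) y) (fun x y => g (a (a x)) y)) X1 X2 X3 X4 X Y
      = lam * Tach (fun x y => g (a x) y)
          (KN (fun x y => g (a x) y) (fun x y => g (a x) y)) X1 X2 X3 X4 X Y := by
    simp only [Tach]
    rw [hKN (wedgeEnd (fun x y => g (a x) y) X Y X1) X2 X3 X4,
        hKN X1 (wedgeEnd (fun x y => g (a x) y) X Y X2) X3 X4,
        hKN X1 X2 (wedgeEnd (fun x y => g (a x) y) X Y X3) X4,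
        hKN X1 X2 X3 (wedgeEnd (fun x y => g (a x) y) X Y X4)]
    ring
  -- the Tachibana identity:  Q(A, A∧A) = 0
  have key3 : Tach (fun x y => g (a x) y)
      (KN (fun x y => g (a x) y) (fun x y => g (a x) y)) X1 X2 X3 X4 X Y = 0 := by
    simp only [Tach, KN, wedgeEnd, map_sub, map_smul, LinearMap.sub_apply,
      LinearMap.smul_apply, smul_eq_mul]
    simp only [ha X2 X1, ha X3 X1, ha X4 X1, ha X X1, ha Y X1,
      ha X3 X2, ha X4 X2, ha X X2, ha Y X2, ha X4 X3, ha X X3, ha Y X3,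
      ha X X4, ha Y X4, ha Y X]
    ring
  rw [key, key2, key3]
  ring
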